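/- arXiv:1604.07733 — 5 statements merged into one kernel-verified Lean document; each statement's English description precedes it below -/
import Mathlib

section
/- For every function f in the class U, we have Re(f(z)/z) > 1/2 for all z with |z| < √2 − 1. -/
open Complex Metric Set ComplexConjugate Filter Topology

noncomputable section

/-- compatibility: the complex absolute value as a bundled absolute value -/
def Complex.abs : AbsoluteValue ℂ ℝ where
  toFun := norm
  map_mul' := norm_mul
  nonneg' := norm_nonneg
  eq_zero' _ := norm_eq_zero
  add_le' := norm_add_le

theorem Complex.norm_eq_abs (z : ℂ) : ‖z‖ = Complex.abs z := rfl

theorem Complex.abs_apply (z : ℂ) : Complex.abs z = Real.sqrt (normSq z) := Complex.norm_def z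

theorem Complex.abs_conj (z : ℂ) : Complex.abs (conj z) = Complex.abs z := Complex.norm_conj z

theorem Complex.abs_ofReal (r : ℝ) : Complex.abs (r : ℂ) = |r| :=
  (Complex.norm_real r).trans (Real.norm_eq_abs r)

theorem Complex.sq_abs (z : ℂ) : Complex.abs z ^ 2 = normSq z := Complex.sq_norm z

theorem Complex.abs_re_le_abs (z : ℂ) : |z.re| ≤ Complex.abs z := Complex.abs_re_le_norm z

theorem Complex.abs_le_abs_of_mapsTo_ball_self {f : ℂ → ℂ} {R : ℝ}
    (hd : DifferentiableOn ℂ f (ball 0 R)) (h_maps : MapsTo f (ball 0 R) (ball 0 R))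
    (h₀ : f 0 = 0) {z : ℂ} (hz : Complex.abs z < R) : Complex.abs (f z) ≤ Complex.abs z :=
  Complex.norm_le_norm_of_mapsTo_ball hd (h_maps.mono_right ball_subset_closedBall) h₀ hz

namespace UProof

/-- limiting helper -/
lemma le_one_of_forall_mul_sq_le {rlo x : ℝ} (h0 : 0 ≤ rlo) (h1 : rlo < 1)
    (hx : ∀ r : ℝ, rlo < r → r < 1 → x * r ^ 2 ≤ 1) : x ≤ 1 := by
  by_contra hgt
  push_neg at hgt
  have hx0 : 0 < x := lt_trans one_pos hgt
  have hxi : x⁻¹ < 1 := by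
    nlinarith [inv_mul_cancel₀ (ne_of_gt hx0), mul_pos (sub_pos.mpr hgt) (inv_pos.mpr hx0)]
  set s := Real.sqrt x⁻¹ with hs
  have hs0 : 0 ≤ s := Real.sqrt_nonneg _
  have hs2 : s ^ 2 = x⁻¹ := Real.sq_sqrt (by positivity)
  have hs1 : s < 1 := by nlinarith
  obtain ⟨r, hr1, hr2⟩ := exists_between (max_lt (max_lt h1 hs1) (by norm_num : (0:ℝ) < 1))
  have hrlo : rlo < r := lt_of_le_of_lt (le_trans (le_max_left _ _) (le_max_left _ _)) hr1
  have hsr : s < r := lt_of_le_of_lt (le_trans (le_max_right _ _) (le_max_left _ _)) hr1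
  have hr0 : 0 < r := lt_of_le_of_lt (le_max_right _ _) hr1
  have hlt : x * s ^ 2 < x * r ^ 2 := by
    apply mul_lt_mul_of_pos_left _ hx0
    nlinarith
  rw [hs2, mul_inv_cancel₀ (ne_of_gt hx0)] at hlt
  linarith [hx r hrlo hr2]

/-- max modulus on subdisk -/
lemma maxmod {F : ℂ → ℂ} {C r : ℝ} (hd : DifferentiableOn ℂ F (ball (0:ℂ) 1))
    (hr0 : 0 < r) (hr1 : r < 1) (hb : ∀ w : ℂ, Complex.abs w = r → Complex.abs (F w) ≤ C)
    {z : ℂ} (hz : Complex.abs z ≤ r) : Complex.abs (F z) ≤ C := by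
  have hsub : closedBall (0:ℂ) r ⊆ ball (0:ℂ) 1 := closedBall_subset_ball (by linarith)
  have hcl : closure (ball (0:ℂ) r) = closedBall (0:ℂ) r := closure_ball _ hr0.ne'
  have hd' : DiffContOnCl ℂ F (ball (0:ℂ) r) := by
    apply DifferentiableOn.diffContOnCl
    rw [hcl]
    exact hd.mono hsub
  have hfr : ∀ w ∈ frontier (ball (0:ℂ) r), ‖F w‖ ≤ C := by
    intro w hw
    rw [frontier_ball _ hr0.ne'] at hw
    exact hb w (by simpa [Complex.norm_eq_abs] using mem_sphere_zero_iff_norm.1 hw)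
  have hzc : z ∈ closure (ball (0:ℂ) r) := by
    rw [hcl]; exact mem_closedBall_zero_iff.2 (by simpa [Complex.norm_eq_abs] using hz)
  simpa [Complex.norm_eq_abs] using
    Complex.norm_le_of_forall_mem_frontier_norm_le isBounded_ball hd' hfr hzc

/-- Möbius map -/
def mob (a w : ℂ) : ℂ := (a - w) / (1 - conj a * w)

lemma one_sub_ne {y : ℂ} (h : Complex.abs y < 1) : (1 : ℂ) - y ≠ 0 := by
  intro h0
  have : (1 : ℂ) = y := by linear_combination h0
  rw [← this] at h
  simp at h

lemma normSq_mob_identity (a w : ℂ) :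
    normSq (1 - conj a * w) - normSq (a - w) = (1 - normSq a) * (1 - normSq w) := by
  simp [normSq_apply, Complex.mul_re, Complex.mul_im, Complex.sub_re, Complex.sub_im]
  ring

lemma abs_mob_lt_one {a w : ℂ} (ha : Complex.abs a < 1) (hw : Complex.abs w < 1) :
    Complex.abs (mob a w) < 1 := by
  have hden : Complex.abs (conj a * w) < 1 := by
    rw [map_mul, Complex.abs_conj]
    calc Complex.abs a * Complex.abs w ≤ Complex.abs a * 1 :=
          mul_le_mul_of_nonneg_left hw.le (Complex.abs.nonneg _)
      _ < 1 := by simpa using ha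
  have hD : (1 : ℂ) - conj a * w ≠ 0 := one_sub_ne hden
  have hDpos : 0 < Complex.abs (1 - conj a * w) := by
    simpa [Complex.abs.pos_iff] using hD
  rw [mob, map_div₀, div_lt_one hDpos]
  have h1 : normSq (a - w) < normSq (1 - conj a * w) := by
    have := normSq_mob_identity a w
    have ha2 : normSq a < 1 := by rw [← Complex.sq_abs]; nlinarith [Complex.abs.nonneg a]
    have hw2 : normSq w < 1 := by rw [← Complex.sq_abs]; nlinarith [Complex.abs.nonneg w]
    nlinarith
  rw [Complex.abs_apply, Complex.abs_apply]
  exact Real.sqrt_lt_sqrt (normSq_nonneg _) h1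

lemma mob_self (a : ℂ) : mob a a = 0 := by simp [mob]

lemma mob_zero (a : ℂ) : mob a 0 = a := by simp [mob]

lemma mob_mob {a w : ℂ} (ha : Complex.abs a < 1) (hw : Complex.abs w < 1) :
    mob a (mob a w) = w := by
  have hden : Complex.abs (conj a * w) < 1 := by
    rw [map_mul, Complex.abs_conj]
    calc Complex.abs a * Complex.abs w ≤ Complex.abs a * 1 :=
          mul_le_mul_of_nonneg_left hw.le (Complex.abs.nonneg _)
      _ < 1 := by simpa using ha
  have hD : (1 : ℂ) - conj a * w ≠ 0 := one_sub_ne hden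
  have hm : Complex.abs (mob a w) < 1 := abs_mob_lt_one ha hw
  have hden2 : Complex.abs (conj a * mob a w) < 1 := by
    rw [map_mul, Complex.abs_conj]
    calc Complex.abs a * Complex.abs (mob a w) ≤ Complex.abs a * 1 :=
          mul_le_mul_of_nonneg_left hm.le (Complex.abs.nonneg _)
      _ < 1 := by simpa using ha
  have hD2 : (1 : ℂ) - conj a * mob a w ≠ 0 := one_sub_ne hden2
  have haa : (1 : ℂ) - conj a * a ≠ 0 := by
    have : Complex.abs (conj a * a) < 1 := by
      rw [map_mul, Complex.abs_conj]
      nlinarith [Complex.abs.nonneg a]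
    exact one_sub_ne this
  simp only [mob] at hD2 ⊢
  rw [div_eq_iff hD2]
  have hD' : (1 : ℂ) - w * conj a ≠ 0 := by rwa [mul_comm w]
  field_simp [hD, hD']
  ring


lemma sq_le_imp {A B : ℝ} (hA : 0 ≤ A) (hB : 0 ≤ B) (h : A ^ 2 ≤ B ^ 2) : A ≤ B :=
  le_of_pow_le_pow_left₀ two_ne_zero hB h

/-- scaling improves the pseudo-hyperbolic contraction -/
lemma scale_ineq {k : ℝ} (hk0 : 0 ≤ k) (hk1 : k ≤ 1) {w : ℂ} (hw : Complex.abs w ≤ 1) :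
    (1 + k ^ 2) * Complex.abs (1 - w) ≤ 2 * Complex.abs (1 - (k ^ 2 : ℂ) * w) := by
  have hns : normSq w ≤ 1 := by rw [← Complex.sq_abs]; nlinarith [Complex.abs.nonneg w]
  have hre : -1 ≤ w.re := by
    have h' : |w.re| ≤ 1 := le_trans (Complex.abs_re_le_abs w) hw
    linarith [(abs_le.1 h').1]
  apply sq_le_imp (by positivity) (by positivity)
  have key : 4 * normSq (1 - (k ^ 2 : ℂ) * w) - (1 + k ^ 2) ^ 2 * normSq (1 - w) =
      ((1 + k ^ 2) ^ 2 - 4 * k ^ 4) * (1 - normSq w) + 2 * (1 - k ^ 2) ^ 2 * (1 + w.re) := by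
    simp [normSq_apply, Complex.mul_re, Complex.mul_im, Complex.sub_re, Complex.sub_im,
      ← Complex.ofReal_pow, Complex.ofReal_re, Complex.ofReal_im]
    ring
  have hk2 : k ^ 2 ≤ 1 := by nlinarith
  have hk4 : k ^ 4 ≤ k ^ 2 := by nlinarith [mul_le_mul_of_nonneg_left hk2 (sq_nonneg k)]
  have h1 : (1 + k ^ 2) ^ 2 - 4 * k ^ 4 ≥ 0 := by nlinarith
  have h2 : 0 ≤ 1 - normSq w := by linarith
  have h3 : 0 ≤ 1 + w.re := by linarith
  have e1 : ((1 + k ^ 2) * Complex.abs (1 - w)) ^ 2 = (1 + k ^ 2) ^ 2 * normSq (1 - w) := by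
    rw [mul_pow, Complex.sq_abs]
  have e2 : (2 * Complex.abs (1 - (k ^ 2 : ℂ) * w)) ^ 2 =
      4 * normSq (1 - (k ^ 2 : ℂ) * w) := by
    rw [mul_pow, Complex.sq_abs]; ring
  rw [e1, e2]
  nlinarith [mul_nonneg h1 h2, mul_nonneg (mul_nonneg (by norm_num : (0:ℝ) ≤ 2)
    (sq_nonneg (1 - k ^ 2))) h3]

/-- Schwarz–Pick, multiplicative form -/
lemma schwarz_pick {u : ℂ → ℂ} (hu : DifferentiableOn ℂ u (ball (0:ℂ) 1))
    (hub : ∀ w ∈ ball (0:ℂ) 1, Complex.abs (u w) < 1)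
    {a z : ℂ} (ha : Complex.abs a < 1) (hz : Complex.abs z < 1) :
    Complex.abs (u z - u a) * Complex.abs (1 - conj a * z) ≤
      Complex.abs (z - a) * Complex.abs (1 - conj (u a) * u z) := by
  have hamem : a ∈ ball (0:ℂ) 1 := mem_ball_zero_iff.2 ha
  have hzmem : z ∈ ball (0:ℂ) 1 := mem_ball_zero_iff.2 hz
  have hua : Complex.abs (u a) < 1 := hub a hamem
  have huz : Complex.abs (u z) < 1 := hub z hzmem
  -- the composed map
  set F : ℂ → ℂ := fun w => mob (u a) (u (mob a w)) with hF
  have hmob_diff : ∀ c : ℂ, Complex.abs c < 1 →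
      DifferentiableOn ℂ (fun w => mob c w) (ball (0:ℂ) 1) := by
    intro c hc
    apply DifferentiableOn.div
    · exact (differentiable_const c).differentiableOn.sub differentiable_id.differentiableOn
    · exact (differentiable_const (1:ℂ)).differentiableOn.sub
        ((differentiable_const (conj c)).mul differentiable_id).differentiableOn
    · intro x hx
      apply one_sub_ne
      rw [map_mul, Complex.abs_conj]
      calc Complex.abs c * Complex.abs x ≤ Complex.abs c * 1 :=
            mul_le_mul_of_nonneg_left (mem_ball_zero_iff.1 hx).le (Complex.abs.nonneg _)
        _ < 1 := by simpa using hc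
  have hmapsTo : ∀ c : ℂ, Complex.abs c < 1 →
      MapsTo (fun w => mob c w) (ball (0:ℂ) 1) (ball (0:ℂ) 1) := by
    intro c hc x hx
    exact mem_ball_zero_iff.2 (abs_mob_lt_one hc (mem_ball_zero_iff.1 hx))
  have humaps : MapsTo u (ball (0:ℂ) 1) (ball (0:ℂ) 1) := fun x hx =>
    mem_ball_zero_iff.2 (hub x hx)
  have hFd : DifferentiableOn ℂ F (ball (0:ℂ) 1) := by
    apply DifferentiableOn.comp (hmob_diff (u a) hua)
    · exact DifferentiableOn.comp hu (hmob_diff a ha) (hmapsTo a ha)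
    · exact MapsTo.comp humaps (hmapsTo a ha)
  have hFmaps : MapsTo F (ball (0:ℂ) 1) (ball (0:ℂ) 1) := by
    intro x hx
    exact (hmapsTo (u a) hua) (humaps ((hmapsTo a ha) hx))
  have hF0 : F 0 = 0 := by
    simp only [hF, mob_zero]
    exact mob_self (u a)
  have hmaz : Complex.abs (mob a z) < 1 := abs_mob_lt_one ha hz
  have hs := Complex.abs_le_abs_of_mapsTo_ball_self hFd hFmaps hF0 (z := mob a z) (by
    simpa using hmaz)
  have hFval : F (mob a z) = mob (u a) (u z) := by
    simp only [hF, mob_mob ha hz]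
  rw [hFval] at hs
  -- unfold the two mobius abs values
  have hduz : Complex.abs (conj (u a) * u z) < 1 := by
    rw [map_mul, Complex.abs_conj]
    calc Complex.abs (u a) * Complex.abs (u z) ≤ Complex.abs (u a) * 1 :=
          mul_le_mul_of_nonneg_left huz.le (Complex.abs.nonneg _)
      _ < 1 := by simpa using hua
  have hdaz : Complex.abs (conj a * z) < 1 := by
    rw [map_mul, Complex.abs_conj]
    calc Complex.abs a * Complex.abs z ≤ Complex.abs a * 1 :=
          mul_le_mul_of_nonneg_left hz.le (Complex.abs.nonneg _)
      _ < 1 := by simpa using ha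
  have hpos1 : 0 < Complex.abs (1 - conj (u a) * u z) := by
    simpa [Complex.abs.pos_iff] using one_sub_ne hduz
  have hpos0 : 0 < Complex.abs (1 - conj a * z) := by
    simpa [Complex.abs.pos_iff] using one_sub_ne hdaz
  rw [mob, mob, map_div₀, map_div₀, div_le_div_iff₀ hpos1 hpos0] at hs
  calc Complex.abs (u z - u a) * Complex.abs (1 - conj a * z)
      = Complex.abs (u a - u z) * Complex.abs (1 - conj a * z) := by
        rw [Complex.abs.map_sub]
    _ ≤ Complex.abs (a - z) * Complex.abs (1 - conj (u a) * u z) := hs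
    _ = Complex.abs (z - a) * Complex.abs (1 - conj (u a) * u z) := by
        rw [Complex.abs.map_sub]

/-- holomorphic self-map of the disk with image bounded away from the boundary
has a fixed point. -/
lemma exists_fixed_point {u : ℂ → ℂ} {k : ℝ} (hk : k < 1)
    (hu : DifferentiableOn ℂ u (ball (0:ℂ) 1))
    (hub : ∀ z ∈ ball (0:ℂ) 1, Complex.abs (u z) ≤ k) :
    ∃ z : ℂ, Complex.abs z < 1 ∧ u z = z := by
  have hk0 : 0 ≤ k := le_trans (Complex.abs.nonneg _) (hub 0 (by simp))
  set κ : ℝ := (1 + k) / 2 with hκdef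
  have hκ0 : 0 < κ := by simp only [hκdef]; linarith
  have hκ1 : κ < 1 := by simp only [hκdef]; linarith
  have hkκ : k < κ := by simp only [hκdef]; linarith
  set v : ℂ → ℂ := fun z => u z / (κ : ℂ) with hvdef
  have hvb : ∀ w ∈ ball (0:ℂ) 1, Complex.abs (v w) < 1 := by
    intro w hw
    simp only [hvdef, map_div₀, Complex.abs_ofReal, abs_of_pos hκ0]
    rw [div_lt_one hκ0]
    exact lt_of_le_of_lt (hub w hw) hkκ
  have hvd : DifferentiableOn ℂ v (ball (0:ℂ) 1) := hu.div_const _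
  set c : ℝ := 2 * κ / (1 + κ ^ 2) with hcdef
  have hden : 0 < 1 + κ ^ 2 := by positivity
  have hc0 : 0 ≤ c := by positivity
  have hc1 : c < 1 := by
    rw [hcdef, div_lt_one hden]
    nlinarith [sq_nonneg (1 - κ)]
  -- the key contraction estimate
  have star : ∀ a ∈ ball (0:ℂ) 1, ∀ z ∈ ball (0:ℂ) 1,
      Complex.abs (u z - u a) * Complex.abs (1 - conj a * z) ≤
        c * (Complex.abs (z - a) * Complex.abs (1 - conj (u a) * u z)) := by
    intro a hamem z hzmem
    have ha : Complex.abs a < 1 := mem_ball_zero_iff.1 hamem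
    have hz : Complex.abs z < 1 := mem_ball_zero_iff.1 hzmem
    have hva : Complex.abs (v a) ≤ 1 := (hvb a hamem).le
    have hvz : Complex.abs (v z) ≤ 1 := (hvb z hzmem).le
    have hw1 : Complex.abs (conj (v a) * v z) ≤ 1 := by
      rw [map_mul, Complex.abs_conj]
      calc Complex.abs (v a) * Complex.abs (v z) ≤ 1 * 1 :=
            mul_le_mul hva hvz (Complex.abs.nonneg _) one_pos.le
        _ = 1 := by norm_num
    have hsc := scale_ineq hκ0.le hκ1.le hw1
    have huv : ∀ w : ℂ, u w = (κ : ℂ) * v w := by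
      intro w
      simp only [hvdef]
      have hκne : (κ : ℂ) ≠ 0 := by
        simpa using hκ0.ne'
      field_simp
    have habs_uv : Complex.abs (u z - u a) = κ * Complex.abs (v z - v a) := by
      rw [huv z, huv a, ← mul_sub, map_mul, Complex.abs_ofReal, abs_of_pos hκ0]
    have hconj : (1 : ℂ) - conj (u a) * u z =
        1 - ((κ ^ 2 : ℝ) : ℂ) * (conj (v a) * v z) := by
      rw [huv z, huv a, map_mul, Complex.conj_ofReal]
      push_cast
      ring
    have hstep : κ * Complex.abs (1 - conj (v a) * v z) ≤
        c * Complex.abs (1 - conj (u a) * u z) := by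
      rw [hconj]
      calc κ * Complex.abs (1 - conj (v a) * v z)
          = κ / (1 + κ ^ 2) * ((1 + κ ^ 2) * Complex.abs (1 - conj (v a) * v z)) := by
            field_simp
        _ ≤ κ / (1 + κ ^ 2) *
            (2 * Complex.abs (1 - ((κ ^ 2 : ℝ) : ℂ) * (conj (v a) * v z))) := by
            apply mul_le_mul_of_nonneg_left _ (le_of_lt (div_pos hκ0 hden))
            have hκc : ((κ ^ 2 : ℝ) : ℂ) = (κ : ℂ) ^ 2 := by push_cast; ring
            rw [hκc]
            exact hsc
        _ = c * Complex.abs (1 - ((κ ^ 2 : ℝ) : ℂ) * (conj (v a) * v z)) := by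
            rw [hcdef]; ring
    calc Complex.abs (u z - u a) * Complex.abs (1 - conj a * z)
        = κ * (Complex.abs (v z - v a) * Complex.abs (1 - conj a * z)) := by
          rw [habs_uv]; ring
      _ ≤ κ * (Complex.abs (z - a) * Complex.abs (1 - conj (v a) * v z)) :=
          mul_le_mul_of_nonneg_left (schwarz_pick hvd hvb ha hz) hκ0.le
      _ = Complex.abs (z - a) * (κ * Complex.abs (1 - conj (v a) * v z)) := by ring
      _ ≤ Complex.abs (z - a) * (c * Complex.abs (1 - conj (u a) * u z)) :=
          mul_le_mul_of_nonneg_left hstep (Complex.abs.nonneg _)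
      _ = c * (Complex.abs (z - a) * Complex.abs (1 - conj (u a) * u z)) := by ring
  -- the iteration
  set x : ℕ → ℂ := fun n => u^[n] 0 with hxdef
  have hx0 : x 0 = 0 := rfl
  have hxsucc : ∀ n, x (n + 1) = u (x n) := by
    intro n
    simp only [hxdef, Function.iterate_succ_apply']
  have hxk : ∀ n, Complex.abs (x n) ≤ k := by
    intro n
    induction n with
    | zero => simpa [hx0] using hk0
    | succ m ih =>
      rw [hxsucc m]
      exact hub _ (mem_ball_zero_iff.2 (lt_of_le_of_lt ih hk))
  have hxball : ∀ n, x n ∈ ball (0:ℂ) 1 := fun n =>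
    mem_ball_zero_iff.2 (lt_of_le_of_lt (hxk n) hk)
  set D : ℕ → ℝ := fun n => Complex.abs (1 - conj (x n) * x (n+1)) with hDdef
  have hk2 : 0 < 1 - k ^ 2 := by nlinarith
  have habsk : ∀ n m, Complex.abs (conj (x n) * x m) ≤ k ^ 2 := by
    intro n m
    rw [map_mul, Complex.abs_conj]
    calc Complex.abs (x n) * Complex.abs (x m) ≤ k * k :=
          mul_le_mul (hxk n) (hxk m) (Complex.abs.nonneg _) hk0
      _ = k ^ 2 := (sq k).symm
  have hDlow : ∀ n, 1 - k ^ 2 ≤ D n := by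
    intro n
    have h2 : |Complex.abs (1:ℂ) - Complex.abs (conj (x n) * x (n+1))| ≤ D n :=
      Complex.abs.abs_abv_sub_le_abv_sub _ _
    have h3 := le_abs_self (Complex.abs (1:ℂ) - Complex.abs (conj (x n) * x (n+1)))
    have := habsk n (n+1)
    simp only [map_one] at h2 h3
    linarith [le_trans h3 h2]
  have hDpos : ∀ n, 0 < D n := fun n => lt_of_lt_of_le hk2 (hDlow n)
  have hDup : ∀ n, D n ≤ 2 := by
    intro n
    have h1 : D n ≤ ‖(1:ℂ)‖ + ‖conj (x n) * x (n+1)‖ := by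
      simpa only [hDdef, Complex.norm_eq_abs] using norm_sub_le (1:ℂ) (conj (x n) * x (n+1))
    have := habsk n (n+1)
    simp only [norm_one, Complex.norm_eq_abs] at h1
    nlinarith
  set e : ℕ → ℝ := fun n => Complex.abs (x (n+1) - x n) with hedef
  have hQrec : ∀ n, e (n+1) * D n ≤ c * (e n * D (n+1)) := by
    intro n
    have h := star (x n) (hxball n) (x (n+1)) (hxball (n+1))
    rw [← hxsucc n, ← hxsucc (n+1)] at h
    exact h
  have hQ0 : e 0 / D 0 ≤ k / (1 - k ^ 2) := by
    apply div_le_div₀ hk0 _ hk2 (hDlow 0)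
    simp only [hedef, hx0, sub_zero]
    exact hxk 1
  have hQ : ∀ n, e n / D n ≤ k / (1 - k ^ 2) * c ^ n := by
    intro n
    induction n with
    | zero => simpa using hQ0
    | succ m ih =>
      have key : e (m+1) / D (m+1) ≤ c * e m / D m := by
        rw [div_le_div_iff₀ (hDpos (m+1)) (hDpos m)]
        calc e (m+1) * D m ≤ c * (e m * D (m+1)) := hQrec m
          _ = c * e m * D (m+1) := by ring
      calc e (m+1) / D (m+1) ≤ c * e m / D m := key
        _ = c * (e m / D m) := by rw [mul_div_assoc]
        _ ≤ c * (k / (1 - k ^ 2) * c ^ m) := mul_le_mul_of_nonneg_left ih hc0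
        _ = k / (1 - k ^ 2) * c ^ (m+1) := by ring
  have hCnn : 0 ≤ k / (1 - k ^ 2) := div_nonneg hk0 hk2.le
  have hdist : ∀ n, dist (x n) (x (n+1)) ≤ 2 * (k / (1 - k ^ 2)) * c ^ n := by
    intro n
    have h1 : e n ≤ k / (1 - k ^ 2) * c ^ n * D n := by
      have := hQ n
      rwa [div_le_iff₀ (hDpos n)] at this
    have h3 : e n ≤ k / (1 - k ^ 2) * c ^ n * 2 := le_trans h1 (by
      apply mul_le_mul_of_nonneg_left (hDup n)
      exact mul_nonneg hCnn (pow_nonneg hc0 n))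
    have h4 : dist (x n) (x (n+1)) = e n := by
      rw [dist_eq_norm]
      simp only [hedef, Complex.norm_eq_abs]
      rw [Complex.abs.map_sub]
    rw [h4]
    linarith
  have hcauchy : CauchySeq x := cauchySeq_of_le_geometric c _ hc1 hdist
  obtain ⟨L, hL⟩ := cauchySeq_tendsto_of_complete hcauchy
  have hmem : ∀ n, x n ∈ closedBall (0:ℂ) k := fun n =>
    mem_closedBall_zero_iff.2 (by simpa [Complex.norm_eq_abs] using hxk n)
  have hLk : L ∈ closedBall (0:ℂ) k :=
    IsClosed.mem_of_tendsto Metric.isClosed_closedBall hL (Eventually.of_forall hmem)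
  have hL1 : Complex.abs L < 1 :=
    lt_of_le_of_lt (by simpa [Complex.norm_eq_abs] using mem_closedBall_zero_iff.1 hLk) hk
  have hcont : ContinuousAt u L :=
    (hu.differentiableAt (isOpen_ball.mem_nhds (mem_ball_zero_iff.2 hL1))).continuousAt
  have h1 : Tendsto (fun n => x (n+1)) atTop (𝓝 L) := hL.comp (tendsto_add_atTop_nat 1)
  have h2 : Tendsto (fun n => u (x n)) atTop (𝓝 (u L)) := hcont.tendsto.comp hL
  have heq : (fun n => x (n+1)) = fun n => u (x n) := funext hxsucc
  rw [heq] at h1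
  exact ⟨L, hL1, tendsto_nhds_unique h2 h1⟩


end UProof

open UProof

/-- The class `U`: analytic on the unit disk, normalized, with
`|(z/f(z))^2 f'(z) - 1| < 1` on the disk (stated for `z ≠ 0`,
which handles the removable singularity at the origin). -/
def inU (f : ℂ → ℂ) : Prop :=
  DifferentiableOn ℂ f (ball (0:ℂ) 1) ∧ f 0 = 0 ∧ deriv f 0 = 1 ∧
    ∀ z ∈ ball (0:ℂ) 1, z ≠ 0 →
      ‖(z / f z) ^ 2 * deriv f z - 1‖ < 1

theorem stmt0 (f : ℂ → ℂ) (hf : inU f) :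
    ∀ z : ℂ, z ≠ 0 → ‖z‖ < Real.sqrt 2 - 1 →
      (1 : ℝ) / 2 < (f z / z).re := by
  obtain ⟨hfd, hf0, hf1, hfU⟩ := hf
  set p : ℂ → ℂ := dslope f 0 with hpdef
  have hpd : DifferentiableOn ℂ p (ball (0:ℂ) 1) :=
    (Complex.differentiableOn_dslope (ball_mem_nhds 0 one_pos)).2 hfd
  have hp0 : p 0 = 1 := by rw [hpdef, dslope_same, hf1]
  have hpz : ∀ z : ℂ, z ≠ 0 → p z = f z / z := by
    intro z hz
    rw [hpdef, dslope_of_ne _ hz, slope_def_field, hf0, sub_zero, sub_zero]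
  have hfne : ∀ z ∈ ball (0:ℂ) 1, z ≠ 0 → f z ≠ 0 := by
    intro z hz hz0 h0
    have := hfU z hz hz0
    rw [h0] at this
    simp at this
  have hpne : ∀ z ∈ ball (0:ℂ) 1, p z ≠ 0 := by
    intro z hz
    rcases eq_or_ne z 0 with rfl | hz0
    · rw [hp0]; exact one_ne_zero
    · rw [hpz z hz0]; exact div_ne_zero (hfne z hz hz0) hz0
  set g : ℂ → ℂ := fun z => (p z)⁻¹ with hgdef
  have hgd : DifferentiableOn ℂ g (ball (0:ℂ) 1) := hpd.inv hpne
  have hg0 : g 0 = 1 := by rw [hgdef]; simp [hp0]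
  set q : ℂ → ℂ := dslope g 0 with hqdef
  have hqd : DifferentiableOn ℂ q (ball (0:ℂ) 1) :=
    (Complex.differentiableOn_dslope (ball_mem_nhds 0 one_pos)).2 hgd
  have hgq : ∀ z : ℂ, z ≠ 0 → g z = 1 + z * q z := by
    intro z hz0
    rw [hqdef, dslope_of_ne _ hz0, slope_def_field, hg0]
    field_simp
    ring
  set b : ℂ := q 0 with hbdef
  -- claim 1 : boundary bound for deriv q
  have claim1 : ∀ w ∈ ball (0:ℂ) 1, w ≠ 0 →
      Complex.abs (deriv q w) * (Complex.abs w) ^ 2 < 1 := by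
    intro w hw hw0
    have hfw : f w ≠ 0 := hfne w hw hw0
    have hfa : DifferentiableAt ℂ f w := hfd.differentiableAt (isOpen_ball.mem_nhds hw)
    have hev : q =ᶠ[nhds w] fun t => (f t)⁻¹ - t⁻¹ := by
      have h1 : ∀ᶠ t in nhds w, f t ≠ 0 := hfa.continuousAt.eventually_ne hfw
      have h2 : ∀ᶠ t in nhds w, t ≠ 0 := eventually_ne_nhds hw0
      filter_upwards [h1, h2] with t ht1 ht2
      rw [hqdef, dslope_of_ne _ ht2, slope_def_field, hg0, hgdef]
      simp only [hpdef, dslope_of_ne _ ht2, slope_def_field, hf0, sub_zero]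
      field_simp
    have h3 : HasDerivAt (fun t => (f t)⁻¹) (-deriv f w / f w ^ 2) w := hfa.hasDerivAt.inv hfw
    have h4 : HasDerivAt (fun t : ℂ => t⁻¹) (-(w ^ 2)⁻¹) w := hasDerivAt_inv hw0
    have hq' : deriv q w = -deriv f w / f w ^ 2 + (w ^ 2)⁻¹ := by
      rw [hev.deriv_eq, show (fun t => (f t)⁻¹ - t⁻¹) = ((fun t => (f t)⁻¹) - fun t : ℂ => t⁻¹)
        from rfl, (h3.sub h4).deriv]
      ring
    have hkey : deriv q w * w ^ 2 = -((w / f w) ^ 2 * deriv f w - 1) := by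
      rw [hq']
      field_simp
      ring
    calc Complex.abs (deriv q w) * (Complex.abs w) ^ 2
        = Complex.abs (deriv q w * w ^ 2) := by rw [map_mul, map_pow]
      _ = Complex.abs ((w / f w) ^ 2 * deriv f w - 1) := by rw [hkey, Complex.abs.map_neg]
      _ < 1 := hfU w hw hw0
  -- claim 2 : |q'| ≤ 1 on the disk
  have claim2 : ∀ w ∈ ball (0:ℂ) 1, Complex.abs (deriv q w) ≤ 1 := by
    intro w hw
    have hqa : AnalyticOnNhd ℂ q (ball (0:ℂ) 1) := hqd.analyticOnNhd isOpen_ball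
    have hqd' : DifferentiableOn ℂ (deriv q) (ball (0:ℂ) 1) := hqa.deriv.differentiableOn
    have hw1 : Complex.abs w < 1 := mem_ball_zero_iff.1 hw
    apply le_one_of_forall_mul_sq_le (Complex.abs.nonneg w) hw1
    intro r hr hr1
    have hr0 : 0 < r := lt_of_le_of_lt (Complex.abs.nonneg w) hr
    have hbound : ∀ y : ℂ, Complex.abs y = r → Complex.abs (deriv q y) ≤ 1 / r ^ 2 := by
      intro y hy
      have hy1 : Complex.abs y < 1 := by rw [hy]; exact hr1
      have hy0 : y ≠ 0 := by
        intro h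
        rw [h, map_zero] at hy
        exact hr0.ne hy
      have h5 := claim1 y (mem_ball_zero_iff.2 hy1) hy0
      rw [hy] at h5
      rw [le_div_iff₀ (by positivity)]
      nlinarith [Complex.abs.nonneg (deriv q y)]
    have h6 := maxmod hqd' hr0 hr1 hbound (le_of_lt hr)
    calc Complex.abs (deriv q w) * r ^ 2 ≤ 1 / r ^ 2 * r ^ 2 :=
          mul_le_mul_of_nonneg_right h6 (sq_nonneg r)
      _ = 1 := by field_simp
  -- claim 3 : |q w - b| ≤ |w|
  have claim3 : ∀ w ∈ ball (0:ℂ) 1, Complex.abs (q w - b) ≤ Complex.abs w := by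
    intro w hw
    have hdiff : ∀ x ∈ ball (0:ℂ) 1, DifferentiableAt ℂ q x := fun x hx =>
      hqd.differentiableAt (isOpen_ball.mem_nhds hx)
    have hmv := Convex.norm_image_sub_le_of_norm_deriv_le hdiff
      (fun x hx => by simpa [Complex.norm_eq_abs] using claim2 x hx)
      (convex_ball (0:ℂ) 1) (mem_ball_self one_pos) hw
    simpa [hbdef, Complex.norm_eq_abs] using hmv
  have hebound : ∀ w ∈ ball (0:ℂ) 1,
      Complex.abs (g w - 1 - b * w) ≤ (Complex.abs w) ^ 2 := by
    intro w hw
    rcases eq_or_ne w 0 with rfl | hw0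
    · simp [hg0]
    · rw [hgq w hw0]
      have hrw : (1 : ℂ) + w * q w - 1 - b * w = w * (q w - b) := by ring
      rw [hrw, map_mul]
      calc Complex.abs w * Complex.abs (q w - b) ≤ Complex.abs w * Complex.abs w :=
            mul_le_mul_of_nonneg_left (claim3 w hw) (Complex.abs.nonneg w)
        _ = (Complex.abs w) ^ 2 := (sq _).symm
  -- the second coefficient bound |b| ≤ 2
  have hb2 : Complex.abs b ≤ 2 := by
    by_contra hbgt
    push_neg at hbgt
    set B : ℝ := Complex.abs b with hBdef
    have hB0 : 0 < B := lt_trans two_pos hbgt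
    have hbne : b ≠ 0 := by
      intro h
      rw [hBdef, h, map_zero] at hB0
      exact lt_irrefl 0 hB0
    set ρ : ℝ := 2 / B with hρdef
    have hρ0 : 0 < ρ := by positivity
    have hρ1 : ρ < 1 := by rw [hρdef, div_lt_one hB0]; exact hbgt
    have hρc : (ρ:ℂ) ≠ 0 := by exact_mod_cast hρ0.ne'
    have hBρ : B * ρ = 2 := by rw [hρdef]; field_simp
    set U : ℂ → ℂ := fun z => -(1 + (g ((ρ:ℂ) * z) - 1 - b * ((ρ:ℂ) * z))) / (b * (ρ:ℂ))
      with hUdef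
    set k : ℝ := (1 + ρ ^ 2) / 2 with hkdef
    have hk1 : k < 1 := by
      rw [hkdef]
      nlinarith [mul_pos (sub_pos.mpr hρ1) hρ0]
    have hmaps : ∀ z : ℂ, Complex.abs z < 1 → (ρ:ℂ) * z ∈ ball (0:ℂ) 1 := by
      intro z hz
      simp only [mem_ball_zero_iff, Complex.norm_eq_abs, map_mul, Complex.abs_ofReal,
        abs_of_pos hρ0]
      nlinarith [Complex.abs.nonneg z, mul_lt_mul_of_pos_left hz hρ0]
    have hub : ∀ z ∈ ball (0:ℂ) 1, Complex.abs (U z) ≤ k := by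
      intro z hz
      have hz1 : Complex.abs z < 1 := by simpa [Complex.norm_eq_abs] using mem_ball_zero_iff.1 hz
      have he := hebound _ (hmaps z hz1)
      have habsρz : Complex.abs ((ρ:ℂ) * z) ≤ ρ := by
        rw [map_mul, Complex.abs_ofReal, abs_of_pos hρ0]
        nlinarith [Complex.abs.nonneg z, mul_le_mul_of_nonneg_left hz1.le hρ0.le]
      have h1 : Complex.abs (U z) =
          Complex.abs (1 + (g ((ρ:ℂ) * z) - 1 - b * ((ρ:ℂ) * z))) / (B * ρ) := by
        rw [hUdef]
        simp only []
        rw [map_div₀, Complex.abs.map_neg, map_mul, Complex.abs_ofReal, abs_of_pos hρ0,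
          ← hBdef]
      have h2 : Complex.abs (1 + (g ((ρ:ℂ) * z) - 1 - b * ((ρ:ℂ) * z))) ≤ 1 + ρ ^ 2 := by
        calc Complex.abs (1 + (g ((ρ:ℂ) * z) - 1 - b * ((ρ:ℂ) * z)))
            ≤ Complex.abs 1 + Complex.abs (g ((ρ:ℂ) * z) - 1 - b * ((ρ:ℂ) * z)) :=
              Complex.abs.add_le _ _
          _ ≤ 1 + (Complex.abs ((ρ:ℂ) * z)) ^ 2 := by
              rw [map_one]
              exact add_le_add_right he _
          _ ≤ 1 + ρ ^ 2 := by nlinarith [Complex.abs.nonneg ((ρ:ℂ) * z)]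
      rw [h1, hBρ, hkdef]
      gcongr
    have hgin : DifferentiableOn ℂ (fun z => g ((ρ:ℂ) * z)) (ball (0:ℂ) 1) := by
      apply DifferentiableOn.comp hgd
        ((differentiable_const ((ρ:ℂ))).mul differentiable_id).differentiableOn
      intro z hz
      exact hmaps z (mem_ball_zero_iff.1 hz)
    have hud : DifferentiableOn ℂ U (ball (0:ℂ) 1) := by
      rw [hUdef]
      apply DifferentiableOn.div_const
      apply DifferentiableOn.neg
      apply DifferentiableOn.add (differentiableOn_const _)
      apply DifferentiableOn.sub
      apply DifferentiableOn.sub hgin (differentiableOn_const _)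
      exact ((differentiable_const b).mul
        ((differentiable_const ((ρ:ℂ))).mul differentiable_id)).differentiableOn
    obtain ⟨zs, hzs1, hzfix⟩ := exists_fixed_point hk1 hud hub
    have hUz : -(1 + (g ((ρ:ℂ) * zs) - 1 - b * ((ρ:ℂ) * zs))) = zs * (b * (ρ:ℂ)) := by
      have h := hzfix
      rw [hUdef] at h
      simp only [] at h
      rwa [div_eq_iff (mul_ne_zero hbne hρc)] at h
    have hgz0 : g ((ρ:ℂ) * zs) = 0 := by linear_combination -hUz
    have hne := hpne _ (hmaps zs hzs1)
    rw [hgdef] at hgz0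
    exact hne (inv_eq_zero.mp hgz0)
  -- final computation
  intro z hz0 hzr
  rw [Complex.norm_eq_abs] at hzr
  have hsq2 : Real.sqrt 2 ^ 2 = 2 := Real.sq_sqrt (by norm_num)
  have hs3 : Real.sqrt 2 < 2 := by
    nlinarith [Real.sqrt_nonneg 2, sq_nonneg (Real.sqrt 2 - 2)]
  have hz1 : Complex.abs z < 1 := by linarith
  have hzmem : z ∈ ball (0:ℂ) 1 := mem_ball_zero_iff.2 hz1
  set r : ℝ := Complex.abs z with hrdef
  have hr0 : 0 ≤ r := Complex.abs.nonneg z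
  have hrineq : r * (2 + r) < 1 := by
    have ha : 0 < Real.sqrt 2 - (r + 1) := by linarith
    have hbp : 0 < Real.sqrt 2 + (r + 1) := by
      have := Real.sqrt_nonneg 2
      linarith
    nlinarith [mul_pos ha hbp]
  have hqz : Complex.abs (q z) ≤ 2 + r := by
    have h7 : q z = b + (q z - b) := by ring
    rw [h7]
    calc Complex.abs (b + (q z - b)) ≤ Complex.abs b + Complex.abs (q z - b) :=
          Complex.abs.add_le _ _
      _ ≤ 2 + r := add_le_add hb2 (claim3 z hzmem)
  have hg1 : Complex.abs (g z - 1) < 1 := by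
    rw [hgq z hz0]
    have h8 : (1:ℂ) + z * q z - 1 = z * q z := by ring
    rw [h8, map_mul]
    calc Complex.abs z * Complex.abs (q z) ≤ r * (2 + r) :=
          mul_le_mul_of_nonneg_left hqz hr0
      _ < 1 := hrineq
  have hgne : g z ≠ 0 := by
    rw [hgdef]
    exact inv_ne_zero (hpne z hzmem)
  have hfz : f z / z = (g z)⁻¹ := by
    rw [hgdef, inv_inv, hpz z hz0]
  rw [hfz, Complex.inv_re]
  have hnsq : 0 < normSq (g z) := normSq_pos.2 hgne
  have hlt : normSq (g z - 1) < 1 := by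
    rw [← Complex.sq_abs]
    nlinarith [Complex.abs.nonneg (g z - 1)]
  have hexp : normSq (g z - 1) = normSq (g z) - 2 * (g z).re + 1 := by
    simp [normSq_apply, Complex.sub_re, Complex.sub_im]
    ring
  rw [lt_div_iff₀ hnsq]
  linarith
end
end

section
/- If f ∈ S and g(z) = z·(f(zⁿ)/zⁿ)^{1/n} (principal branch, value 1 at 0 for the factor), then g ∈ S ∩ A_n, i.e. g is univalent on the unit disk, g(0)=0, g'(0)=1, and the Taylor coefficients of g of orders 2 through n vanish. -/
open Complex Metric Set

private lemma norm_eq_one_of_pow_eq_one' {ω : ℂ} {n : ℕ} (hn : 1 ≤ n) (hω : ω ^ n = 1) :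
    ‖ω‖ = 1 := by
  have hpow : ‖ω‖ ^ n = 1 := by rw [← norm_pow, hω, norm_one]
  rcases lt_trichotomy (‖ω‖) 1 with hlt | he | hgt
  · have := pow_lt_one₀ (norm_nonneg ω) hlt (by omega : n ≠ 0)
    rw [hpow] at this; exact absurd this (lt_irrefl 1)
  · exact he
  · have := one_lt_pow₀ hgt (by omega : n ≠ 0)
    rw [hpow] at this; exact absurd this (lt_irrefl 1)

private lemma aux_iter_smul (s : ℂ → ℂ) (hs : AnalyticOnNhd ℂ s (ball (0:ℂ) 1)) (c : ℂ)
    (hc : ‖c‖ ≤ 1) :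
    ∀ (k : ℕ), ∀ z ∈ ball (0:ℂ) 1,
      iteratedDeriv k (fun x => s (c * x)) z = c ^ k * iteratedDeriv k s (c * z) := by
  have hmem : ∀ y ∈ ball (0:ℂ) 1, c * y ∈ ball (0:ℂ) 1 := by
    intro y hy
    rw [mem_ball_zero_iff] at hy ⊢
    calc ‖c * y‖ = ‖c‖ * ‖y‖ := norm_mul c y
    _ ≤ 1 * ‖y‖ := by gcongr
    _ < 1 := by simpa using hy
  intro k
  induction k with
  | zero => intro z hz; simp
  | succ k ih =>
    intro z hz
    have hq : AnalyticOnNhd ℂ (iteratedDeriv k s) (ball (0:ℂ) 1) := by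
      have := hs.iterated_deriv k
      rwa [← iteratedDeriv_eq_iterate] at this
    have hev : iteratedDeriv k (fun x => s (c * x)) =ᶠ[nhds z]
        fun y => c ^ k * iteratedDeriv k s (c * y) := by
      filter_upwards [isOpen_ball.mem_nhds hz] with y hy using ih y hy
    rw [iteratedDeriv_succ, hev.deriv_eq]
    have hd : HasDerivAt (iteratedDeriv k s) (deriv (iteratedDeriv k s) (c * z)) (c * z) :=
      ((hq (c * z) (hmem z hz)).differentiableAt).hasDerivAt
    have hlin : HasDerivAt (fun y : ℂ => c * y) c z := by
      simpa using (hasDerivAt_id z).const_mul c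
    have h2 : HasDerivAt (fun y => iteratedDeriv k s (c * y))
        (deriv (iteratedDeriv k s) (c * z) * c) z := by
      exact HasDerivAt.comp z hd hlin
    have h3 := (h2.const_mul (c ^ k)).deriv
    rw [h3, iteratedDeriv_succ]
    ring

private lemma aux_prod (h : ℂ → ℂ) (hh : AnalyticOnNhd ℂ h (ball (0:ℂ) 1)) :
    ∀ (k : ℕ), ∀ z ∈ ball (0:ℂ) 1,
      iteratedDeriv (k + 1) (fun x => x * h x) z
        = z * iteratedDeriv (k + 1) h z + (k + 1 : ℂ) * iteratedDeriv k h z := by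
  have hq : ∀ j : ℕ, AnalyticOnNhd ℂ (iteratedDeriv j h) (ball (0:ℂ) 1) := by
    intro j
    have := hh.iterated_deriv j
    rwa [← iteratedDeriv_eq_iterate] at this
  intro k
  induction k with
  | zero =>
    intro z hz
    have hd : HasDerivAt h (deriv h z) z := ((hh z hz).differentiableAt).hasDerivAt
    have := ((hasDerivAt_id z).mul hd).deriv
    rw [iteratedDeriv_one]
    simp only [Pi.mul_def, id] at this
    rw [this, iteratedDeriv_one, iteratedDeriv_zero]
    ring
  | succ k ih =>
    intro z hz
    have hev : iteratedDeriv (k + 1) (fun x => x * h x) =ᶠ[nhds z]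
        fun y => y * iteratedDeriv (k + 1) h y + (k + 1 : ℂ) * iteratedDeriv k h y := by
      filter_upwards [isOpen_ball.mem_nhds hz] with y hy using ih y hy
    rw [iteratedDeriv_succ, hev.deriv_eq]
    have hd1 : HasDerivAt (iteratedDeriv (k + 1) h)
        (deriv (iteratedDeriv (k + 1) h) z) z :=
      ((hq (k + 1) z hz).differentiableAt).hasDerivAt
    have hd0 : HasDerivAt (iteratedDeriv k h) (deriv (iteratedDeriv k h) z) z :=
      ((hq k z hz).differentiableAt).hasDerivAt
    have hA : HasDerivAt (fun y => y * iteratedDeriv (k + 1) h y)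
        (1 * iteratedDeriv (k + 1) h z + z * deriv (iteratedDeriv (k + 1) h) z) z := by
      simpa [id, Pi.mul_def] using (hasDerivAt_id z).mul hd1
    have hB : HasDerivAt (fun y => (k + 1 : ℂ) * iteratedDeriv k h y)
        ((k + 1 : ℂ) * deriv (iteratedDeriv k h) z) z := hd0.const_mul _
    have := (hA.add hB).deriv
    simp only [Pi.add_def] at this
    rw [this]
    rw [← iteratedDeriv_succ, ← iteratedDeriv_succ]
    push_cast
    ring

theorem stmt5 (f : ℂ → ℂ) (n : ℕ) (hn : 1 ≤ n)
    (hfd : DifferentiableOn ℂ f (ball (0:ℂ) 1))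
    (hfi : InjOn f (ball (0:ℂ) 1)) (hf0 : f 0 = 0) (hf1 : deriv f 0 = 1)
    (h : ℂ → ℂ) (hhd : DifferentiableOn ℂ h (ball (0:ℂ) 1)) (hh0 : h 0 = 1)
    (hhn : ∀ z ∈ ball (0:ℂ) 1, z ≠ 0 → (h z) ^ n = f (z ^ n) / z ^ n) :
    DifferentiableOn ℂ (fun z => z * h z) (ball (0:ℂ) 1) ∧
    InjOn (fun z => z * h z) (ball (0:ℂ) 1) ∧
    (fun z => z * h z) 0 = 0 ∧ deriv (fun z => z * h z) 0 = 1 ∧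
    ∀ k : ℕ, 2 ≤ k → k ≤ n → iteratedDeriv k (fun z => z * h z) 0 = 0 := by
  have h0mem : (0:ℂ) ∈ ball (0:ℂ) 1 := mem_ball_self one_pos
  have hA : AnalyticOnNhd ℂ h (ball (0:ℂ) 1) := hhd.analyticOnNhd isOpen_ball
  have hpown : ∀ z ∈ ball (0:ℂ) 1, z ^ n ∈ ball (0:ℂ) 1 := by
    intro z hz
    rw [mem_ball_zero_iff] at hz ⊢
    rw [norm_pow]
    exact pow_lt_one₀ (norm_nonneg z) hz (by omega)
  have hne : ∀ z ∈ ball (0:ℂ) 1, h z ≠ 0 := by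
    intro z hz hcon
    by_cases hz0 : z = 0
    · rw [hz0, hh0] at hcon; exact one_ne_zero hcon
    · have h1 := hhn z hz hz0
      rw [hcon, zero_pow (by omega : n ≠ 0)] at h1
      have hfz : f (z ^ n) = 0 := by
        rcases div_eq_zero_iff.mp h1.symm with h2 | h2
        · exact h2
        · exact absurd h2 (pow_ne_zero n hz0)
      have := hfi (hpown z hz) h0mem (by rw [hfz, hf0])
      exact pow_ne_zero n hz0 this
  -- the key symmetry
  have key : ∀ ω : ℂ, ω ^ n = 1 → ∀ z ∈ ball (0:ℂ) 1, h (ω * z) = h z := by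
    intro ω hω z hz
    have hωn : ‖ω‖ = 1 := norm_eq_one_of_pow_eq_one' hn hω
    have hmul : ∀ y ∈ ball (0:ℂ) 1, ω * y ∈ ball (0:ℂ) 1 := by
      intro y hy
      rw [mem_ball_zero_iff] at hy ⊢
      rw [norm_mul, hωn, one_mul]; exact hy
    set S : Set ℂ := (Polynomial.nthRootsFinset n (1 : ℂ) : Set ℂ) with hS
    have hFc : ContinuousOn (fun y => h (ω * y) / h y) (ball (0:ℂ) 1) := by
      refine ContinuousOn.div ?_ hhd.continuousOn hne
      exact hhd.continuousOn.comp (continuous_const.mul continuous_id).continuousOn hmul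
    have hFm : MapsTo (fun y => h (ω * y) / h y) (ball (0:ℂ) 1) S := by
      intro y hy
      rw [hS, Finset.mem_coe, Polynomial.mem_nthRootsFinset (by omega : 0 < n) (1 : ℂ)]
      by_cases hy0 : y = 0
      · subst hy0; simp [hh0]
      · have hωy0 : ω * y ≠ 0 := by
          intro hc
          rcases mul_eq_zero.mp hc with hc | hc
          · rw [hc, zero_pow (by omega : n ≠ 0)] at hω; exact zero_ne_one hω
          · exact hy0 hc
        rw [div_pow, hhn (ω * y) (hmul y hy) hωy0, hhn y hy hy0, mul_pow, hω, one_mul]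
        exact div_self (by
          rw [← hhn y hy hy0]
          exact pow_ne_zero n (hne y hy))
    have hconst := (convex_ball (0:ℂ) 1).isPreconnected.constant_of_mapsTo (Set.toFinite S).isDiscrete hFc hFm hz h0mem
    simp only [mul_zero, hh0, div_one] at hconst
    exact (div_eq_one_iff_eq (hne z hz)).mp hconst
  have gpow : ∀ a ∈ ball (0:ℂ) 1, (a * h a) ^ n = f (a ^ n) := by
    intro a ha
    by_cases ha0 : a = 0
    · rw [ha0, zero_mul, zero_pow (by omega : n ≠ 0), hf0]
    · rw [mul_pow, hhn a ha ha0, mul_div_cancel₀ _ (pow_ne_zero n ha0)]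
  refine ⟨differentiableOn_id.mul hhd, ?_, by simp, ?_, ?_⟩
  · -- injectivity
    intro a ha b hb hab
    simp only at hab
    have habn : a ^ n = b ^ n :=
      hfi (hpown a ha) (hpown b hb) (by rw [← gpow a ha, ← gpow b hb, hab])
    by_cases ha0 : a = 0
    · rw [ha0, zero_mul] at hab
      rcases mul_eq_zero.mp hab.symm with hc | hc
      · rw [ha0, hc]
      · exact absurd hc (hne b hb)
    · have hb0 : b ≠ 0 := by
        intro hc
        rw [hc, zero_mul] at hab
        rcases mul_eq_zero.mp hab with hc2 | hc2
        · exact ha0 hc2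
        · exact hne a ha hc2
      have hωn : (b / a) ^ n = 1 := by
        rw [div_pow, habn, div_self (pow_ne_zero n hb0)]
      have hba : b = (b / a) * a := by field_simp
      have hhb : h b = h a := by
        rw [hba]; exact key (b / a) hωn a ha
      rw [hhb] at hab
      exact mul_right_cancel₀ (hne a ha) hab
  · -- derivative at 0
    have hdh : DifferentiableAt ℂ h 0 := (hA 0 h0mem).differentiableAt
    have := ((hasDerivAt_id (0:ℂ)).mul hdh.hasDerivAt).deriv
    simp only [Pi.mul_def, id] at this
    rw [this, hh0]; ring
  · -- iterated derivatives
    intro k hk2 hkn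
    obtain ⟨m, rfl⟩ : ∃ m, k = m + 1 := ⟨k - 1, by omega⟩
    set ω : ℂ := Complex.exp (2 * Real.pi * Complex.I / n) with hωdef
    have hprim : IsPrimitiveRoot ω n := Complex.isPrimitiveRoot_exp n (by omega)
    have hωpow : ω ^ n = 1 := hprim.pow_eq_one
    have hωnorm : ‖ω‖ ≤ 1 := le_of_eq (norm_eq_one_of_pow_eq_one' hn hωpow)
    have hDvanish : ∀ j : ℕ, 1 ≤ j → j < n → iteratedDeriv j h 0 = 0 := by
      intro j hj1 hjn
      have he : (fun x => h (ω * x)) =ᶠ[nhds 0] h := by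
        filter_upwards [isOpen_ball.mem_nhds h0mem] with y hy using key ω hωpow y hy
      have h1 := he.iteratedDeriv_eq j
      have h2 := aux_iter_smul h hA ω hωnorm j 0 h0mem
      rw [mul_zero] at h2
      rw [h2] at h1
      have h3 : (ω ^ j - 1) * iteratedDeriv j h 0 = 0 := by
        rw [sub_mul, one_mul, h1, sub_self]
      rcases mul_eq_zero.mp h3 with hc | hc
      · exact absurd (sub_eq_zero.mp hc) (hprim.pow_ne_one_of_pos_of_lt (by omega) hjn)
      · exact hc
    have := aux_prod h hA m 0 h0mem
    rw [this, hDvanish m (by omega) (by omega), zero_mul, mul_zero, add_zero]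
end

section
/- Let f ∈ U and for fixed ζ in the unit disk let g(z) = (f((ζ+z)/(1+conj(ζ)z)) − f(ζ))/(f'(ζ)(1−|ζ|²)) be the Koebe transform of f at ζ. Then g ∈ U for every ζ in the unit disk if and only if |((ζ−u)² f'(ζ) f'(u))/((f(u)−f(ζ))² ) − 1| < 1 for all ζ, u in the unit disk with ζ ≠ u. -/
open Complex Metric Set

lemma mob_lt (a b : ℂ) (ha : ‖a‖ < 1) (hb : ‖b‖ < 1) :
    ‖(a + b) / (1 + (starRingEnd ℂ) a * b)‖ < 1 := by
  have hd : Complex.normSq (1 + (starRingEnd ℂ) a * b) - Complex.normSq (a + b)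
      = (1 - Complex.normSq a) * (1 - Complex.normSq b) := by
    simp [Complex.normSq_apply, Complex.add_re, Complex.add_im, Complex.mul_re, Complex.mul_im]
    ring
  have hsa : Complex.normSq a < 1 := by rw [← Complex.sq_norm]; nlinarith [norm_nonneg a]
  have hsb : Complex.normSq b < 1 := by rw [← Complex.sq_norm]; nlinarith [norm_nonneg b]
  have hpos : Complex.normSq (a + b) < Complex.normSq (1 + (starRingEnd ℂ) a * b) := by
    nlinarith [Complex.normSq_nonneg (a+b)]
  have habs : ‖a + b‖ < ‖1 + (starRingEnd ℂ) a * b‖ := by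
    rw [Complex.norm_def, Complex.norm_def]
    exact Real.sqrt_lt_sqrt (Complex.normSq_nonneg _) hpos
  have hdne : ‖1 + (starRingEnd ℂ) a * b‖ > 0 :=
    lt_of_le_of_lt (norm_nonneg _) habs
  rw [norm_div, div_lt_one hdne]
  exact habs

lemma denom_ne (a b : ℂ) (ha : ‖a‖ < 1) (hb : ‖b‖ < 1) :
    (1 + (starRingEnd ℂ) a * b) ≠ 0 := by
  intro h
  have : ‖(starRingEnd ℂ) a * b‖ < 1 := by
    rw [norm_mul, Complex.norm_conj]; nlinarith [norm_nonneg a, norm_nonneg b]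
  have h2 : (starRingEnd ℂ) a * b = -1 := by linear_combination h
  rw [h2] at this; simp at this

lemma hasDerivAt_mob (ζ z : ℂ) (h1 : 1 + (starRingEnd ℂ) ζ * z ≠ 0) :
    HasDerivAt (fun w => (ζ + w)/(1 + (starRingEnd ℂ) ζ * w))
      ((1 - (starRingEnd ℂ) ζ * ζ)/(1 + (starRingEnd ℂ) ζ * z)^2) z := by
  have h := ((hasDerivAt_id z).const_add ζ).div
    (((hasDerivAt_id z).const_mul ((starRingEnd ℂ) ζ)).const_add 1) h1
  refine h.congr_deriv ?_
  simp only [id]; ring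

lemma algid (ζ z A B P Q : ℂ) (h1 : 1 + (starRingEnd ℂ) ζ * z ≠ 0)
    (hA : A ≠ 0) (hs : (1:ℂ) - (starRingEnd ℂ) ζ * ζ ≠ 0) :
    (z / ((P - Q)/(A * (1 - (starRingEnd ℂ) ζ * ζ))))^2 *
      (B * ((1 - (starRingEnd ℂ) ζ * ζ)/(1 + (starRingEnd ℂ) ζ * z)^2) /
        (A * (1 - (starRingEnd ℂ) ζ * ζ)))
    = (ζ - (ζ + z)/(1 + (starRingEnd ℂ) ζ * z))^2 * A * B / (P - Q)^2 := by
  set c := (starRingEnd ℂ) ζ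
  have heq : ζ - (ζ + z)/(1 + c * z) = -(z * (1 - c*ζ))/(1 + c*z) := by
    rw [eq_div_iff h1, sub_mul, div_mul_cancel₀ _ h1]; ring
  rw [heq]
  by_cases hPQ : P - Q = 0
  · rw [hPQ]; simp
  · field_simp

lemma mem_ball_iff_abs (z : ℂ) : z ∈ ball (0:ℂ) 1 ↔ ‖z‖ < 1 := by
  simp [mem_ball, Complex.dist_eq]

lemma fprime_ne (f : ℂ → ℂ) (hf : inU f) : ∀ ζ ∈ ball (0:ℂ) 1, deriv f ζ ≠ 0 := by
  intro ζ hζ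
  by_cases h0 : ζ = 0
  · rw [h0, hf.2.2.1]; exact one_ne_zero
  · intro hd
    have := hf.2.2.2 ζ hζ h0
    rw [hd] at this
    simp at this

lemma hasDerivAt_g (f : ℂ → ℂ) (hdf : DifferentiableOn ℂ f (ball (0:ℂ) 1))
    (ζ : ℂ) (D : ℂ) (z : ℂ)
    (h1 : 1 + (starRingEnd ℂ) ζ * z ≠ 0)
    (hu : (ζ + z)/(1 + (starRingEnd ℂ) ζ * z) ∈ ball (0:ℂ) 1) :
    HasDerivAt (fun w => (f ((ζ + w)/(1 + (starRingEnd ℂ) ζ * w)) - f ζ)/D)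
      (deriv f ((ζ + z)/(1 + (starRingEnd ℂ) ζ * z)) *
        ((1 - (starRingEnd ℂ) ζ * ζ)/(1 + (starRingEnd ℂ) ζ * z)^2) / D) z := by
  have hmob := hasDerivAt_mob ζ z h1
  have hfu : HasDerivAt f (deriv f ((ζ + z)/(1 + (starRingEnd ℂ) ζ * z)))
      ((ζ + z)/(1 + (starRingEnd ℂ) ζ * z)) :=
    (hdf.differentiableAt (isOpen_ball.mem_nhds hu)).hasDerivAt
  exact ((hfu.comp z hmob).sub_const (f ζ)).div_const D

theorem stmt10 (f : ℂ → ℂ) (hf : inU f) :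
    (∀ ζ ∈ ball (0:ℂ) 1,
        inU (fun z => (f ((ζ + z) / (1 + (starRingEnd ℂ) ζ * z)) - f ζ) /
          (deriv f ζ * (1 - ((‖ζ‖ : ℝ) : ℂ) ^ 2)))) ↔
    (∀ ζ ∈ ball (0:ℂ) 1, ∀ u ∈ ball (0:ℂ) 1, ζ ≠ u →
        ‖(ζ - u) ^ 2 * deriv f ζ * deriv f u / (f u - f ζ) ^ 2 - 1‖ < 1) := by
  have hScast : ∀ ζ : ℂ, ((‖ζ‖ : ℝ) : ℂ) ^ 2 = (starRingEnd ℂ) ζ * ζ := by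
    intro ζ
    rw [show (starRingEnd ℂ) ζ * ζ = ζ * (starRingEnd ℂ) ζ from mul_comm _ _, Complex.mul_conj]
    push_cast [← Complex.sq_norm]
    ring
  have hsne : ∀ ζ : ℂ, ‖ζ‖ < 1 → (1:ℂ) - (starRingEnd ℂ) ζ * ζ ≠ 0 := by
    intro ζ hζ
    rw [← hScast]
    intro h
    have : ((1 - ‖ζ‖ ^ 2 : ℝ) : ℂ) = 0 := by push_cast; linear_combination h
    have h2 : (1 - ‖ζ‖ ^ 2 : ℝ) = 0 := by exact_mod_cast this
    nlinarith [norm_nonneg ζ]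
  constructor
  · intro h ζ hζ u hu hne
    have hζa : ‖ζ‖ < 1 := (mem_ball_iff_abs ζ).mp hζ
    have hua : ‖u‖ < 1 := (mem_ball_iff_abs u).mp hu
    have hfζ : deriv f ζ ≠ 0 := fprime_ne f hf ζ hζ
    have hs := hsne ζ hζa
    have hcu : (1 : ℂ) - (starRingEnd ℂ) ζ * u ≠ 0 := by
      have := denom_ne (-ζ) u (by simpa using hζa) hua
      simpa [neg_mul, ← sub_eq_add_neg] using this
    set z := (u - ζ) / (1 - (starRingEnd ℂ) ζ * u) with hzdef
    have hzball : z ∈ ball (0:ℂ) 1 := by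
      rw [mem_ball_iff_abs, hzdef]
      have hmob := mob_lt (-ζ) u (by simpa using hζa) hua
      rw [map_neg, neg_mul, ← sub_eq_add_neg, neg_add_eq_sub] at hmob
      exact hmob
    have hza : ‖z‖ < 1 := (mem_ball_iff_abs z).mp hzball
    have hz0 : z ≠ 0 := div_ne_zero (sub_ne_zero.mpr hne.symm) hcu
    have h1z : (1 : ℂ) + (starRingEnd ℂ) ζ * z ≠ 0 := denom_ne ζ z hζa hza
    have hs' : (1:ℂ) - ζ * (starRingEnd ℂ) ζ ≠ 0 := by rwa [mul_comm] at hs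
    have hmz : (ζ + z) / (1 + (starRingEnd ℂ) ζ * z) = u := by
      rw [div_eq_iff h1z, hzdef]
      linear_combination div_mul_cancel₀ (u - ζ) hcu
    have huball : (ζ + z) / (1 + (starRingEnd ℂ) ζ * z) ∈ ball (0:ℂ) 1 := hmz ▸ hu
    have h4 := (h ζ hζ).2.2.2 z hzball hz0
    simp only [hScast] at h4
    rw [(hasDerivAt_g f hf.1 ζ (deriv f ζ * (1 - (starRingEnd ℂ) ζ * ζ)) z h1z huball).deriv]
      at h4
    rw [algid ζ z (deriv f ζ) (deriv f ((ζ + z) / (1 + (starRingEnd ℂ) ζ * z)))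
      (f ((ζ + z) / (1 + (starRingEnd ℂ) ζ * z))) (f ζ) h1z hfζ hs] at h4
    rw [hmz] at h4
    exact h4
  · intro h ζ hζ
    have hζa : ‖ζ‖ < 1 := (mem_ball_iff_abs ζ).mp hζ
    have hfζ : deriv f ζ ≠ 0 := fprime_ne f hf ζ hζ
    have hs := hsne ζ hζa
    refine ⟨?_, ?_, ?_, ?_⟩
    · intro z hz
      have hza : ‖z‖ < 1 := (mem_ball_iff_abs z).mp hz
      have h1z : (1 : ℂ) + (starRingEnd ℂ) ζ * z ≠ 0 := denom_ne ζ z hζa hza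
      have huball : (ζ + z) / (1 + (starRingEnd ℂ) ζ * z) ∈ ball (0:ℂ) 1 :=
        (mem_ball_iff_abs _).mpr (mob_lt ζ z hζa hza)
      exact ((hasDerivAt_g f hf.1 ζ _ z h1z huball).differentiableAt).differentiableWithinAt
    · simp
    · have h10 : (1 : ℂ) + (starRingEnd ℂ) ζ * 0 ≠ 0 := by simp
      have hu0 : (ζ + 0) / (1 + (starRingEnd ℂ) ζ * 0) ∈ ball (0:ℂ) 1 := by simpa using hζ
      rw [(hasDerivAt_g f hf.1 ζ _ 0 h10 hu0).deriv]
      simp only [mul_zero, add_zero, div_one, one_pow]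
      rw [hScast]
      field_simp
    · intro z hz hz0
      have hza : ‖z‖ < 1 := (mem_ball_iff_abs z).mp hz
      have h1z : (1 : ℂ) + (starRingEnd ℂ) ζ * z ≠ 0 := denom_ne ζ z hζa hza
      have huball : (ζ + z) / (1 + (starRingEnd ℂ) ζ * z) ∈ ball (0:ℂ) 1 :=
        (mem_ball_iff_abs _).mpr (mob_lt ζ z hζa hza)
      have hsub : ζ - (ζ + z) / (1 + (starRingEnd ℂ) ζ * z)
          = -(z * (1 - (starRingEnd ℂ) ζ * ζ)) / (1 + (starRingEnd ℂ) ζ * z) := by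
        rw [eq_div_iff h1z, sub_mul, div_mul_cancel₀ _ h1z]; ring
      have hne : ζ ≠ (ζ + z) / (1 + (starRingEnd ℂ) ζ * z) := by
        rw [← sub_ne_zero, hsub]
        exact div_ne_zero (by simpa using mul_ne_zero hz0 hs) h1z
      have happ := h ζ hζ _ huball hne
      simp only [hScast]
      rw [(hasDerivAt_g f hf.1 ζ (deriv f ζ * (1 - (starRingEnd ℂ) ζ * ζ)) z h1z huball).deriv]
      rw [algid ζ z (deriv f ζ) (deriv f ((ζ + z) / (1 + (starRingEnd ℂ) ζ * z)))
        (f ((ζ + z) / (1 + (starRingEnd ℂ) ζ * z))) (f ζ) h1z hfζ hs]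
      exact happ
end

section
/- Let n ≥ 3 be an integer and define g(φ) = (2 cos φ)^{2/n − 1} sin φ − sin(2φ/n) for φ ∈ [0, π/2). Then g(φ) ≥ 0 for all φ ∈ [0, π/2). -/
open Complex Metric Set

lemma key_ineq (x : ℝ) (hx0 : 0 ≤ x) (hx : x ≤ Real.pi / 2) :
    x ≤ (2 - Real.cos x) * Real.sin x := by
  set f : ℝ → ℝ := fun t => (2 - Real.cos t) * Real.sin t - t with hf
  have hderiv : ∀ t : ℝ, HasDerivAt f
      (Real.sin t * Real.sin t + (2 - Real.cos t) * Real.cos t - 1) t := by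
    intro t
    have h1 : HasDerivAt (fun t : ℝ => 2 - Real.cos t) (Real.sin t) t := by
      simpa using (Real.hasDerivAt_cos t).const_sub (2:ℝ)
    exact (h1.mul (Real.hasDerivAt_sin t)).sub (hasDerivAt_id t)
  have hmono : MonotoneOn f (Set.Icc 0 (Real.pi / 2)) := by
    apply monotoneOn_of_deriv_nonneg (convex_Icc _ _)
    · exact (Continuous.continuousOn (by continuity))
    · intro t ht
      exact (hderiv t).differentiableAt.differentiableWithinAt
    · intro t ht
      rw [(hderiv t).deriv]
      simp only [interior_Icc, Set.mem_Ioo] at ht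
      have hc0 : 0 ≤ Real.cos t := Real.cos_nonneg_of_mem_Icc
        ⟨by linarith [Real.pi_pos], le_of_lt ht.2⟩
      have hc1 : Real.cos t ≤ 1 := Real.cos_le_one t
      nlinarith [Real.sin_sq_add_cos_sq t]
  have h0 : f 0 = 0 := by simp [hf]
  have := hmono (Set.mem_Icc.2 ⟨le_refl 0, by linarith [Real.pi_pos]⟩)
    (Set.mem_Icc.2 ⟨hx0, hx⟩) hx0
  rw [h0] at this
  simpa [hf] using this

theorem stmt14 (n : ℕ) (hn : 3 ≤ n) (φ : ℝ) (hφ0 : 0 ≤ φ) (hφ : φ < Real.pi / 2) :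
    0 ≤ (2 * Real.cos φ) ^ ((2 : ℝ) / n - 1) * Real.sin φ - Real.sin (2 * φ / n) := by
  have hpi := Real.pi_pos
  set c := Real.cos φ with hcdef
  set s := Real.sin φ with hsdef
  have hn3 : (3:ℝ) ≤ (n:ℝ) := by exact_mod_cast hn
  set α : ℝ := 2 / (n:ℝ) with hαdef
  have hα0 : 0 < α := by positivity
  have hα23 : α ≤ 2/3 := by
    rw [hαdef, div_le_div_iff₀ (by linarith) (by norm_num)]
    linarith
  have hc : 0 < c := Real.cos_pos_of_mem_Ioo ⟨by linarith, hφ⟩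
  have hc1 : c ≤ 1 := Real.cos_le_one φ
  have hs : 0 ≤ s := Real.sin_nonneg_of_nonneg_of_le_pi hφ0 (by linarith)
  have hu : 0 < 2 * c := by linarith
  set L := Real.log (2 * c) with hLdef
  have hL : L ≤ 2 * c - 1 := Real.log_le_sub_one_of_pos hu
  have hK : φ ≤ (2 - c) * s := key_ineq φ hφ0 (le_of_lt hφ)
  -- step 1 : sin (2φ/n) ≤ α φ
  have h2φn : 2 * φ / n = α * φ := by
    rw [hαdef]; ring
  have hsin : Real.sin (2 * φ / n) ≤ α * φ := by
    rw [h2φn]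
    exact Real.sin_le (by positivity)
  -- step 2 : (2c)^(α-1) ≥ 1 + (α-1) L
  have hrpow : 1 + (α - 1) * L ≤ (2 * c) ^ (α - 1) := by
    rw [Real.rpow_def_of_pos hu, ← hLdef]
    have := Real.add_one_le_exp (L * (α - 1))
    nlinarith
  -- combine
  have hmul : (1 + (α - 1) * L) * s ≤ (2 * c) ^ (α - 1) * s :=
    mul_le_mul_of_nonneg_right hrpow hs
  have hfinal : 0 ≤ (1 + (α - 1) * L) * s - α * φ := by
    nlinarith [mul_nonneg (mul_nonneg (by linarith : (0:ℝ) ≤ 1 - α) hs)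
        (by linarith : (0:ℝ) ≤ 2 * c - 1 - L),
      mul_nonneg hα0.le (by linarith : (0:ℝ) ≤ (2 - c) * s - φ),
      mul_nonneg (by linarith : (0:ℝ) ≤ 2/3 - α)
        (mul_nonneg (by linarith : (0:ℝ) ≤ 1 - c) hs)]
  linarith
end

section
/- For every integer n ≥ 2 and real x ≥ 0, letting φ = arctan x ∈ [0, π/2), one has sin(2φ/n) ≤ (x/2)·(4/(1+x²))^{1/n}. -/
open Complex Metric Set

open Real in
lemma tangent_sin15 {a b : ℝ} (ha : 0 ≤ a) (hab : a ≤ b) (hb : b ≤ π/2) :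
    Real.sin a ≤ Real.sin b + (a - b) * Real.cos b := by
  rcases eq_or_lt_of_le hab with rfl | h
  · simp
  · obtain ⟨c, hc, hderiv⟩ := exists_hasDerivAt_eq_slope Real.sin Real.cos h
      Real.continuousOn_sin (fun y _ => Real.hasDerivAt_sin y)
    have hcb : Real.cos b ≤ Real.cos c := by
      apply Real.cos_le_cos_of_nonneg_of_le_pi (le_of_lt (lt_of_le_of_lt ha hc.1))
        (le_trans hb (by linarith [Real.pi_pos])) (le_of_lt hc.2)
    have hba : 0 < b - a := by linarith
    have : Real.sin b - Real.sin a = Real.cos c * (b - a) := by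
      field_simp at hderiv; linarith [hderiv]
    nlinarith [mul_le_mul_of_nonneg_right hcb (le_of_lt hba)]

open Real in
lemma keyB15 {φ : ℝ} (h0 : 0 ≤ φ) (h2 : φ < π/2) :
    Real.sin φ * Real.log (2 * Real.cos φ) ≤ φ * Real.cos φ := by
  have hc : 0 < Real.cos φ := Real.cos_pos_of_mem_Ioo ⟨by linarith [Real.pi_pos], h2⟩
  have hs : 0 ≤ Real.sin φ := Real.sin_nonneg_of_nonneg_of_le_pi h0 (by linarith [Real.pi_pos])
  have hlog : Real.log (2 * Real.cos φ) ≤ Real.log 2 + (Real.cos φ - 1) := by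
    rw [Real.log_mul (by norm_num) hc.ne']
    have := Real.log_le_sub_one_of_pos hc
    linarith
  have hl2 : Real.log 2 < 1 := by
    have := Real.log_two_lt_d9; linarith
  have hsl : Real.sin φ ≤ φ := Real.sin_le h0
  nlinarith [mul_le_mul_of_nonneg_left hlog hs, mul_le_mul_of_nonneg_right hsl hc.le]

open Real in
theorem stmt15 (n : ℕ) (hn : 2 ≤ n) (x : ℝ) (hx : 0 ≤ x) :
    Real.sin (2 * Real.arctan x / n) ≤ (x / 2) * (4 / (1 + x ^ 2)) ^ ((1 : ℝ) / n) := by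
  rcases eq_or_lt_of_le hx with rfl | hx0
  · simp
  have hpi := Real.pi_pos
  set φ := Real.arctan x with hφdef
  have hφ0 : 0 < φ := by
    rw [hφdef, ← Real.arctan_zero]; exact Real.arctan_strictMono hx0
  have hφ2 : φ < π / 2 := Real.arctan_lt_pi_div_two x
  have hcpos : 0 < Real.cos φ := Real.cos_arctan_pos x
  have hspos : 0 < Real.sin φ := Real.sin_pos_of_pos_of_lt_pi hφ0 (by linarith)
  have hn0 : (0:ℝ) < (n:ℝ) := by
    have : (2:ℝ) ≤ (n:ℝ) := by exact_mod_cast hn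
    linarith
  set lam : ℝ := 2 / (n:ℝ) with hlamdef
  have hlam0 : 0 < lam := by positivity
  have hlam1 : lam ≤ 1 := by
    rw [hlamdef, div_le_one hn0]; exact_mod_cast hn
  have harg : 2 * φ / (n:ℝ) = lam * φ := by rw [hlamdef]; ring
  set L := Real.log (2 * Real.cos φ) with hLdef
  have h1 : Real.sin (lam * φ) ≤ Real.sin φ + (lam * φ - φ) * Real.cos φ :=
    tangent_sin15 (by positivity) (by nlinarith) hφ2.le
  have hkey : Real.sin φ * L ≤ φ * Real.cos φ := keyB15 hφ0.le hφ2
  have h2 : Real.sin φ + (lam * φ - φ) * Real.cos φ ≤ Real.sin φ * (1 + (lam - 1) * L) := by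
    have hmul := mul_le_mul_of_nonpos_left hkey (by linarith : lam - 1 ≤ 0)
    nlinarith [hmul]
  have h3 : Real.sin φ * (1 + (lam - 1) * L) ≤ Real.sin φ * Real.exp ((lam - 1) * L) :=
    mul_le_mul_of_nonneg_left (by linarith [Real.add_one_le_exp ((lam - 1) * L)]) hspos.le
  have h4 : Real.exp ((lam - 1) * L) = (2 * Real.cos φ) ^ (lam - 1 : ℝ) := by
    rw [Real.rpow_def_of_pos (by positivity), hLdef, mul_comm]
  have hsq : 0 < 1 + x ^ 2 := by positivity
  have hcx : Real.cos φ = 1 / Real.sqrt (1 + x ^ 2) := Real.cos_arctan x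
  have hsx : Real.sin φ = x / Real.sqrt (1 + x ^ 2) := Real.sin_arctan x
  have hsqrt : Real.sqrt (1 + x ^ 2) ^ 2 = 1 + x ^ 2 := Real.sq_sqrt hsq.le
  have hsqrtpos : 0 < Real.sqrt (1 + x ^ 2) := Real.sqrt_pos.mpr hsq
  have hbase : 4 / (1 + x ^ 2) = (2 * Real.cos φ) ^ (2 : ℕ) := by
    rw [hcx]; field_simp; norm_num; rw [hsqrt]; ring
  have h5 : (x / 2) * (4 / (1 + x ^ 2)) ^ ((1 : ℝ) / n)
      = Real.sin φ * (2 * Real.cos φ) ^ (lam - 1 : ℝ) := by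
    rw [hbase, ← Real.rpow_natCast (2 * Real.cos φ) 2, ← Real.rpow_mul (by positivity)]
    have h2n : (2:ℝ) * ((1:ℝ)/n) = lam := by rw [hlamdef]; ring
    push_cast
    rw [h2n, Real.rpow_sub (by positivity), Real.rpow_one]
    rw [hsx, hcx]
    field_simp
  calc Real.sin (2 * φ / n) = Real.sin (lam * φ) := by rw [harg]
    _ ≤ Real.sin φ * Real.exp ((lam - 1) * L) := by linarith
    _ = Real.sin φ * (2 * Real.cos φ) ^ (lam - 1 : ℝ) := by rw [h4]
    _ = (x / 2) * (4 / (1 + x ^ 2)) ^ ((1 : ℝ) / n) := h5.symm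
end
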